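/- Let S be a positive hypergraph and k a natural number. Then the relation <^{S_{k+1},-} (the transitive closure of a ⊲⁻ b iff γ(a) ∈ δ(b) on S_{k+1}) is a strict partial order if and only if the relation <^{S_k,+} (the transitive closure of a ⊲⁺ b iff there exists α ∈ S_{k+1} with a ∈ δ(α) and γ(α) = b) is a strict partial order. -/

import Mathlib

/-- A pre-hypergraph: dimension-indexed finite sets of faces together with
codomain functions `gam k : S_{k+1} → S_k` and domain assignments
`del k : S_{k+1} → Finset S_k`. -/
structure PreHG where
  faces : ℕ → Finset ℕ
  gam : ℕ → ℕ → ℕ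
  del : ℕ → ℕ → Finset ℕ

namespace PreHG

/-- δ extended to sets of faces. -/
def delS (S : PreHG) (k : ℕ) (A : Finset ℕ) : Finset ℕ := A.biUnion (S.del k)

/-- γ extended to sets of faces. -/
def gamS (S : PreHG) (k : ℕ) (A : Finset ℕ) : Finset ℕ := A.image (S.gam k)

/-- The set `ι(a) = δδ(a) ∩ γδ(a)` of internal faces of a face `a` of dimension `k+2`
(the result lives in dimension `k`). -/
def iota (S : PreHG) (k : ℕ) (a : ℕ) : Finset ℕ :=
  S.delS k (S.del (k+1) a) ∩ S.gamS k (S.del (k+1) a)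

/-- One step of the upper order: `a ⊲⁺ b` on faces of dimension `k`:
there is `α` of dimension `k+1` with `a ∈ δ(α)` and `γ(α) = b`. -/
def ltPlusOne (S : PreHG) (k : ℕ) (a b : ℕ) : Prop :=
  ∃ α ∈ S.faces (k+1), a ∈ S.del k α ∧ S.gam k α = b

/-- The upper order `<⁺` on faces of dimension `k` (transitive closure of `⊲⁺`). -/
def ltPlus (S : PreHG) (k : ℕ) : ℕ → ℕ → Prop :=
  Relation.TransGen (S.ltPlusOne k)

/-- One step of the lower order: `a ⊲⁻ b` iff `γ(a) ∈ δ(b)`, on faces of dimension `k`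
(the empty relation in dimension 0). -/
def ltMinusOne (S : PreHG) : ℕ → ℕ → ℕ → Prop
  | 0, _, _ => False
  | (k+1), a, b => a ∈ S.faces (k+1) ∧ b ∈ S.faces (k+1) ∧ S.gam k a ∈ S.del k b

/-- The lower order `<⁻` on faces of dimension `k` (transitive closure of `⊲⁻`). -/
def ltMinus (S : PreHG) (k : ℕ) : ℕ → ℕ → Prop :=
  Relation.TransGen (S.ltMinusOne k)

/-- Comparability in the upper order. -/
def perpPlus (S : PreHG) (k : ℕ) (a b : ℕ) : Prop := S.ltPlus k a b ∨ S.ltPlus k b a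

/-- Comparability in the lower order. -/
def perpMinus (S : PreHG) (k : ℕ) (a b : ℕ) : Prop := S.ltMinus k a b ∨ S.ltMinus k b a

/-- Iterated codomain `γ^{(l)}`: maps a face of dimension `l+m` down to dimension `l`. -/
def gDown (S : PreHG) (l : ℕ) : ℕ → ℕ → ℕ
  | 0, a => a
  | (m+1), a => gDown S l m (S.gam (l+m) a)

/-- The axioms of a positive hypergraph. -/
def IsHG (S : PreHG) : Prop :=
  (∀ k a, a ∈ S.faces (k+1) → S.gam k a ∈ S.faces k) ∧
  (∀ k a, a ∈ S.faces (k+1) → S.del k a ⊆ S.faces k) ∧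
  (∀ k a, a ∈ S.faces (k+1) → (S.del k a).Nonempty) ∧
  (∀ a ∈ S.faces 1, (S.del 0 a).card = 1) ∧
  (∃ N, ∀ k, N ≤ k → S.faces k = ∅)

/-- Globularity: for faces of dimension ≥ 2,
`{γγ(a)} = γδ(a) − δδ(a)` and `δγ(a) = δδ(a) − γδ(a)`. -/
def Globular (S : PreHG) : Prop :=
  ∀ k a, a ∈ S.faces (k+2) →
    ({S.gam k (S.gam (k+1) a)} : Finset ℕ)
        = S.gamS k (S.del (k+1) a) \ S.delS k (S.del (k+1) a) ∧
      S.del k (S.gam (k+1) a)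
        = S.delS k (S.del (k+1) a) \ S.gamS k (S.del (k+1) a)

/-- Strictness: `<⁺` is irreflexive in every dimension. -/
def StrictPlus (S : PreHG) : Prop := ∀ k, ∀ a ∈ S.faces k, ¬ S.ltPlus k a a

/-- `<⁺` is linear in dimension 0. -/
def LinearZero (S : PreHG) : Prop :=
  ∀ a ∈ S.faces 0, ∀ b ∈ S.faces 0, a = b ∨ S.ltPlus 0 a b ∨ S.ltPlus 0 b a

/-- Disjointness: no two faces of positive dimension are comparable in both orders. -/
def Disjointness (S : PreHG) : Prop :=
  ∀ k a b, a ∈ S.faces (k+1) → b ∈ S.faces (k+1) →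
    ¬ (S.perpPlus (k+1) a b ∧ S.perpMinus (k+1) a b)

/-- Pencil linearity: γ-fibers and δ-fibers are linearly ordered by `<⁺`. -/
def Pencil (S : PreHG) : Prop :=
  ∀ k x,
    (∀ a b, a ∈ S.faces (k+1) → b ∈ S.faces (k+1) →
      S.gam k a = x → S.gam k b = x → a = b ∨ S.perpPlus (k+1) a b) ∧
    (∀ a b, a ∈ S.faces (k+1) → b ∈ S.faces (k+1) →
      x ∈ S.del k a → x ∈ S.del k b → a = b ∨ S.perpPlus (k+1) a b)

/-- A positive face structure: a nonempty positive hypergraph satisfying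
globularity, strictness, disjointness and pencil linearity. -/
def IsPFS (S : PreHG) : Prop :=
  S.IsHG ∧ (S.faces 0).Nonempty ∧ S.Globular ∧ S.StrictPlus ∧ S.LinearZero ∧
    S.Disjointness ∧ S.Pencil

end PreHG

/-- In a positive hypergraph, `<⁻` on `S_{k+1}` is a strict partial order
iff `<⁺` on `S_k` is a strict partial order. -/
theorem stmt0 (S : PreHG) (hS : S.IsHG) (k : ℕ) :
    ((∀ a ∈ S.faces (k+1), ¬ S.ltMinus (k+1) a a) ∧
      (∀ a b c, S.ltMinus (k+1) a b → S.ltMinus (k+1) b c → S.ltMinus (k+1) a c)) ↔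
    ((∀ a ∈ S.faces k, ¬ S.ltPlus k a a) ∧
      (∀ a b c, S.ltPlus k a b → S.ltPlus k b c → S.ltPlus k a c)) := by
  have key : ∀ x y, S.ltPlus k x y →
      ∃ α β, α ∈ S.faces (k+1) ∧ β ∈ S.faces (k+1) ∧ x ∈ S.del k α ∧
        S.gam k β = y ∧ (α = β ∨ S.ltMinus (k+1) α β) := by
    intro x y h
    induction h with
    | single h =>
      obtain ⟨α, hα, hxα, hγ⟩ := h
      exact ⟨α, α, hα, hα, hxα, hγ, Or.inl rfl⟩
    | tail _ h ih =>
      obtain ⟨α, β, hα, hβ, hxα, hγ, hd⟩ := ih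
      obtain ⟨α', hα', hyα', hγ'⟩ := h
      have hstep : S.ltMinusOne (k+1) β α' := ⟨hβ, hα', hγ ▸ hyα'⟩
      refine ⟨α, α', hα, hα', hxα, hγ', Or.inr ?_⟩
      rcases hd with rfl | hlt
      · exact Relation.TransGen.single hstep
      · exact hlt.tail hstep
  constructor
  · rintro ⟨hirr, -⟩
    refine ⟨?_, fun a b c h1 h2 => h1.trans h2⟩
    intro x hx hcyc
    obtain ⟨α, β, hα, hβ, hxα, hγ, hd⟩ := key x x hcyc
    have hstep : S.ltMinusOne (k+1) β α := ⟨hβ, hα, hγ ▸ hxα⟩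
    rcases hd with rfl | hlt
    · exact hirr _ hβ (Relation.TransGen.single hstep)
    · exact hirr β hβ (Relation.TransGen.head hstep hlt)
  · rintro ⟨hirr, -⟩
    refine ⟨?_, fun a b c h1 h2 => h1.trans h2⟩
    intro a ha hcyc
    have hmap : S.ltPlus k (S.gam k a) (S.gam k a) := by
      refine Relation.TransGen.lift (S.gam k) ?_ _ _ hcyc
      rintro b c ⟨hb, hc, hmem⟩
      exact ⟨c, hc, hmem, rfl⟩
    exact hirr _ (hS.1 k a ha) hmap
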